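/- For every n ≥ 1, the set of real eigenvalues of the BBS translation transition operator M_B^{(n)} (i.e., the set of real λ with det(M_B^{(n)} − λ·Id) = 0) is exactly {1} ∪ { cos(pπ/q) : p, q ∈ ℕ, 1 ≤ p < q ≤ n+1 }. -/

import Mathlib

open Matrix

/-- Equivalence identifying `Fin (2^n) ⊕ Fin (2^n)` with `Fin (2^(n+1))`. -/
def blockEquiv (n : ℕ) : Fin (2 ^ n) ⊕ Fin (2 ^ n) ≃ Fin (2 ^ (n + 1)) :=
  finSumFinEquiv.trans (finCongr (by rw [pow_succ, mul_two]))

/-- Assemble a `2^(n+1) × 2^(n+1)` matrix from four `2^n × 2^n` blocks. -/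
noncomputable def mkBlock {n : ℕ} (A B C D : Matrix (Fin (2 ^ n)) (Fin (2 ^ n)) ℝ) :
    Matrix (Fin (2 ^ (n + 1))) (Fin (2 ^ (n + 1))) ℝ :=
  Matrix.reindex (blockEquiv n) (blockEquiv n) (Matrix.fromBlocks A B C D)

/-- The pair of BBS translation generators. -/
noncomputable def abB : (n : ℕ) →
    Matrix (Fin (2 ^ n)) (Fin (2 ^ n)) ℝ × Matrix (Fin (2 ^ n)) (Fin (2 ^ n)) ℝ
  | 0 => (1, 1)
  | n + 1 => (mkBlock (abB n).1 (abB n).2 0 0, mkBlock 0 0 (abB n).1 (abB n).2)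

noncomputable def aB (n : ℕ) : Matrix (Fin (2 ^ n)) (Fin (2 ^ n)) ℝ := (abB n).1
noncomputable def bB (n : ℕ) : Matrix (Fin (2 ^ n)) (Fin (2 ^ n)) ℝ := (abB n).2

/-- The pair of lamplighter generators. -/
noncomputable def abL : (n : ℕ) →
    Matrix (Fin (2 ^ n)) (Fin (2 ^ n)) ℝ × Matrix (Fin (2 ^ n)) (Fin (2 ^ n)) ℝ
  | 0 => (1, 1)
  | n + 1 => (mkBlock 0 (abL n).2 (abL n).1 0, mkBlock (abL n).1 0 0 (abL n).2)

noncomputable def aL (n : ℕ) : Matrix (Fin (2 ^ n)) (Fin (2 ^ n)) ℝ := (abL n).1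
noncomputable def bL (n : ℕ) : Matrix (Fin (2 ^ n)) (Fin (2 ^ n)) ℝ := (abL n).2

/-- The BBS translation transition operator. -/
noncomputable def MB (n : ℕ) : Matrix (Fin (2 ^ n)) (Fin (2 ^ n)) ℝ :=
  (1 / 4 : ℝ) • (aB n + (aB n)ᵀ + bB n + (bB n)ᵀ)

/-- The lamplighter transition operator. -/
noncomputable def ML (n : ℕ) : Matrix (Fin (2 ^ n)) (Fin (2 ^ n)) ℝ :=
  (1 / 4 : ℝ) • (aL n + (aL n)ᵀ + bL n + (bL n)ᵀ)

namespace BBS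

variable {n : ℕ}

lemma mkBlock_mul (A B C D A' B' C' D' : Matrix (Fin (2^n)) (Fin (2^n)) ℝ) :
    mkBlock A B C D * mkBlock A' B' C' D' =
      mkBlock (A*A' + B*C') (A*B' + B*D') (C*A' + D*C') (C*B' + D*D') := by
  simp only [mkBlock, reindex_apply,
    Matrix.submatrix_mul_equiv _ _ _ (blockEquiv n).symm, fromBlocks_multiply]

lemma mkBlock_transpose (A B C D : Matrix (Fin (2^n)) (Fin (2^n)) ℝ) :
    (mkBlock A B C D)ᵀ = mkBlock Aᵀ Cᵀ Bᵀ Dᵀ := by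
  simp only [mkBlock, reindex_apply, transpose_submatrix, fromBlocks_transpose]

lemma mkBlock_add (A B C D A' B' C' D' : Matrix (Fin (2^n)) (Fin (2^n)) ℝ) :
    mkBlock A B C D + mkBlock A' B' C' D' = mkBlock (A+A') (B+B') (C+C') (D+D') := by
  ext i j
  simp only [mkBlock, reindex_apply, Matrix.add_apply, submatrix_apply, ← fromBlocks_add, Matrix.add_apply]

lemma mkBlock_neg (A B C D : Matrix (Fin (2^n)) (Fin (2^n)) ℝ) :
    -mkBlock A B C D = mkBlock (-A) (-B) (-C) (-D) := by
  ext i j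
  simp only [mkBlock, reindex_apply, Matrix.neg_apply, submatrix_apply, ← fromBlocks_neg, Matrix.neg_apply]

lemma mkBlock_sub (A B C D A' B' C' D' : Matrix (Fin (2^n)) (Fin (2^n)) ℝ) :
    mkBlock A B C D - mkBlock A' B' C' D' = mkBlock (A-A') (B-B') (C-C') (D-D') := by
  rw [sub_eq_add_neg, mkBlock_neg, mkBlock_add]
  simp [sub_eq_add_neg]

lemma mkBlock_smul (c : ℝ) (A B C D : Matrix (Fin (2^n)) (Fin (2^n)) ℝ) :
    c • mkBlock A B C D = mkBlock (c•A) (c•B) (c•C) (c•D) := by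
  ext i j
  simp only [mkBlock, reindex_apply, Matrix.smul_apply, submatrix_apply, ← fromBlocks_smul, Matrix.smul_apply]

lemma mkBlock_one : mkBlock (1 : Matrix (Fin (2^n)) (Fin (2^n)) ℝ) 0 0 1 = 1 := by
  simp only [mkBlock, fromBlocks_one, reindex_apply, submatrix_one_equiv]

/-- Hadamard matrix. -/
noncomputable def Hm : (n : ℕ) → Matrix (Fin (2^n)) (Fin (2^n)) ℝ
  | 0 => 1
  | n+1 => mkBlock (Hm n) (Hm n) (Hm n) (-(Hm n))

lemma Hm_transpose : ∀ n, (Hm n)ᵀ = Hm n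
  | 0 => by simp [Hm]
  | n+1 => by
    rw [Hm, mkBlock_transpose, transpose_neg, Hm_transpose n]

lemma Hm_mul_self : ∀ n, Hm n * Hm n = (2^n : ℝ) • 1
  | 0 => by simp [Hm]
  | n+1 => by
    rw [Hm, mkBlock_mul]
    have h := Hm_mul_self n
    have eA : Hm n * Hm n + Hm n * Hm n = (2^(n+1):ℝ) • 1 := by
      rw [h, ← add_smul]; congr 1; ring
    have eB : Hm n * Hm n + Hm n * -Hm n = 0 := by noncomm_ring
    have eC : Hm n * Hm n + -Hm n * Hm n = 0 := by noncomm_ring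
    have eD : Hm n * Hm n + -Hm n * -Hm n = (2^(n+1):ℝ) • 1 := by
      rw [show -Hm n * -Hm n = Hm n * Hm n by noncomm_ring]; exact eA
    rw [eA, eB, eC, eD]
    rw [← mkBlock_one, mkBlock_smul, smul_zero]

/-- P/Q pair: (unnormalized) Hadamard transforms of (a+b, a-b). -/
noncomputable def PQ : (n : ℕ) →
    Matrix (Fin (2 ^ n)) (Fin (2 ^ n)) ℝ × Matrix (Fin (2 ^ n)) (Fin (2 ^ n)) ℝ
  | 0 => (1, 0)
  | n + 1 => (mkBlock (PQ n).1 (PQ n).2 0 0, mkBlock 0 0 (PQ n).1 (PQ n).2)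

lemma conj_sd : ∀ n, Hm n * (aB n + bB n) * Hm n = (2^(n+1) : ℝ) • (PQ n).1
    ∧ Hm n * (aB n - bB n) * Hm n = (2^(n+1) : ℝ) • (PQ n).2
  | 0 => by
    constructor
    · show (1:Matrix (Fin 1) (Fin 1) ℝ) * (1 + 1) * 1 = (2^1:ℝ) • 1
      norm_num [two_smul]
    · show (1:Matrix (Fin 1) (Fin 1) ℝ) * (1 - 1) * 1 = (2^1:ℝ) • (0:Matrix (Fin 1) (Fin 1) ℝ)
      norm_num
  | n + 1 => by
    obtain ⟨ih1, ih2⟩ := conj_sd n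
    have hs : aB (n+1) + bB (n+1) = mkBlock (aB n) (bB n) (aB n) (bB n) := by
      show mkBlock (aB n) (bB n) 0 0 + mkBlock 0 0 (aB n) (bB n) = _
      rw [mkBlock_add]; simp
    have hd : aB (n+1) - bB (n+1) = mkBlock (aB n) (bB n) (-(aB n)) (-(bB n)) := by
      show mkBlock (aB n) (bB n) 0 0 - mkBlock 0 0 (aB n) (bB n) = _
      rw [mkBlock_sub]; simp
    have hsc : ∀ X : Matrix (Fin (2^n)) (Fin (2^n)) ℝ,
        (2:ℝ) • ((2^(n+1):ℝ) • X) = (2^(n+1+1):ℝ) • X := by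
      intro X; rw [smul_smul, ← pow_succ']
    have hPQ1 : (PQ (n+1)).1 = mkBlock (PQ n).1 (PQ n).2 0 0 := rfl
    have hPQ2 : (PQ (n+1)).2 = mkBlock 0 0 (PQ n).1 (PQ n).2 := rfl
    have hH : Hm (n+1) = mkBlock (Hm n) (Hm n) (Hm n) (-(Hm n)) := rfl
    set H := Hm n; set a := aB n; set b := bB n
    have b1 : (H*a + H*a)*H + (H*b + H*b)*H = (2^(n+1+1):ℝ) • (PQ n).1 := by
      rw [show (H*a + H*a)*H + (H*b + H*b)*H = (2:ℝ) • (H*(a+b)*H) by rw [two_smul]; noncomm_ring,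
        ih1, hsc]
    have b2 : (H*a + H*a)*H + (H*b + H*b)*(-H) = (2^(n+1+1):ℝ) • (PQ n).2 := by
      rw [show (H*a + H*a)*H + (H*b + H*b)*(-H) = (2:ℝ) • (H*(a-b)*H) by rw [two_smul]; noncomm_ring,
        ih2, hsc]
    have b3 : (H*a + H * -a)*H + (H*b + H * -b)*H = (0:Matrix (Fin (2^n)) (Fin (2^n)) ℝ) := by
      noncomm_ring
    have b4 : (H*a + H * -a)*H + (H*b + H * -b)*(-H) = (0:Matrix (Fin (2^n)) (Fin (2^n)) ℝ) := by
      noncomm_ring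
    have b5 : (H*a + -H*a)*H + (H*b + -H*b)*H = (0:Matrix (Fin (2^n)) (Fin (2^n)) ℝ) := by
      noncomm_ring
    have b6 : (H*a + -H*a)*H + (H*b + -H*b)*(-H) = (0:Matrix (Fin (2^n)) (Fin (2^n)) ℝ) := by
      noncomm_ring
    have b7 : (H*a + -H * -a)*H + (H*b + -H * -b)*H = (2^(n+1+1):ℝ) • (PQ n).1 := by
      rw [show (H*a + -H * -a)*H + (H*b + -H * -b)*H = (2:ℝ) • (H*(a+b)*H) by
        rw [two_smul]; noncomm_ring, ih1, hsc]
    have b8 : (H*a + -H * -a)*H + (H*b + -H * -b)*(-H) = (2^(n+1+1):ℝ) • (PQ n).2 := by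
      rw [show (H*a + -H * -a)*H + (H*b + -H * -b)*(-H) = (2:ℝ) • (H*(a-b)*H) by
        rw [two_smul]; noncomm_ring, ih2, hsc]
    constructor
    · rw [hs, hH, mkBlock_mul, mkBlock_mul, hPQ1, mkBlock_smul, smul_zero]
      rw [b1, b2, b5, b6]
    · rw [hd, hH, mkBlock_mul, mkBlock_mul, hPQ2, mkBlock_smul, smul_zero]
      rw [b3, b4, b7, b8]

/-- The conjugated transition operator. -/
noncomputable def Nmat (n : ℕ) : Matrix (Fin (2 ^ n)) (Fin (2 ^ n)) ℝ :=
  (1 / 2 : ℝ) • ((PQ n).1 + ((PQ n).1)ᵀ)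

lemma conj_M (n : ℕ) : Hm n * MB n * Hm n = (2^n : ℝ) • Nmat n := by
  have hs := (conj_sd n).1
  have hMB : MB n = (1/4 : ℝ) • ((aB n + bB n) + (aB n + bB n)ᵀ) := by
    rw [MB]; rw [transpose_add]; congr 1; abel
  have hst : Hm n * (aB n + bB n)ᵀ * Hm n = (2^(n+1) : ℝ) • ((PQ n).1)ᵀ := by
    have := congrArg Matrix.transpose hs
    rw [transpose_mul, transpose_mul, Hm_transpose, transpose_smul] at this
    rw [← mul_assoc] at this
    exact this
  calc Hm n * MB n * Hm n
      = (1/4:ℝ) • (Hm n * (aB n + bB n) * Hm n + Hm n * (aB n + bB n)ᵀ * Hm n) := by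
        rw [hMB]; rw [mul_smul_comm, smul_mul_assoc]; rw [mul_add, add_mul]
    _ = (1/4:ℝ) • ((2^(n+1) : ℝ) • ((PQ n).1 + ((PQ n).1)ᵀ)) := by
        rw [hs, hst, ← smul_add]
    _ = (2^n : ℝ) • Nmat n := by
        rw [Nmat, smul_smul, smul_smul]; congr 1; rw [pow_succ]; ring

lemma det_transfer (n : ℕ) (x : ℝ) :
    det (MB n - x • 1) = 0 ↔ det (Nmat n - x • 1) = 0 := by
  have hH := Hm_mul_self n
  have hc : ((2:ℝ)^n)^(2^n) ≠ 0 := by positivity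
  have hdetH : det (Hm n) ≠ 0 := by
    intro h
    have h2 : det (Hm n) * det (Hm n) = ((2:ℝ)^n)^(2^n) := by
      rw [← det_mul, hH, det_smul, det_one, mul_one, Fintype.card_fin]
    rw [h, mul_zero] at h2
    exact hc h2.symm
  have key : Hm n * (MB n - x • 1) * Hm n = (2^n : ℝ) • (Nmat n - x • 1) := by
    rw [mul_sub, sub_mul, conj_M]
    rw [mul_smul_comm, smul_mul_assoc, mul_one, hH, smul_sub, smul_smul, smul_smul]
    rw [mul_comm x]
  have base : det (Hm n) * det (MB n - x•1) * det (Hm n)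
      = ((2:ℝ)^n)^(2^n) * det (Nmat n - x•1) := by
    rw [← det_mul, ← det_mul, key, det_smul]
    rw [Fintype.card_fin]
  constructor
  · intro h0
    rw [h0, mul_zero, zero_mul] at base
    exact ((mul_eq_zero.1 base.symm).resolve_left hc)
  · intro h0
    rw [h0, mul_zero] at base
    rcases mul_eq_zero.1 base with h | h
    · exact (mul_eq_zero.1 h).resolve_left hdetH
    · exact absurd h hdetH

end BBS

namespace BBS

/-- head of a bit string -/
def hd {n : ℕ} (x : Fin n → Bool) : Bool := if h : 0 < n then x ⟨0, h⟩ else false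

/-- left shift, appending `false` -/
def Lsh {n : ℕ} (x : Fin n → Bool) : Fin n → Bool :=
  fun i => if h : (i : ℕ) + 1 < n then x ⟨(i : ℕ) + 1, h⟩ else false

lemma hd_cons {n : ℕ} (s : Bool) (x : Fin n → Bool) :
    hd (Fin.cons s x : Fin (n+1) → Bool) = s := by
  simp [hd]

lemma Lsh_cons {n : ℕ} (s : Bool) (x : Fin n → Bool) :
    Lsh (Fin.cons s x : Fin (n+1) → Bool) = Fin.cons (hd x) (Lsh x) := by
  funext i
  refine Fin.cases ?_ (fun j => ?_) i
  · simp only [Lsh, Fin.cons_zero, Fin.val_zero]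
    rcases Nat.lt_or_ge 1 (n+1) with h | h
    · simp only [Nat.zero_add, h, dite_true]
      have hn : 0 < n := by omega
      rw [hd, dif_pos hn]
      show (Fin.cons s x : Fin (n+1) → Bool) ⟨0+1, h⟩ = _
      rw [show (⟨0+1, h⟩ : Fin (n+1)) = Fin.succ ⟨0, hn⟩ by rfl, Fin.cons_succ]
    · have hn : n = 0 := by omega
      simp only [Nat.zero_add, show ¬(1 < n+1) by omega, dite_false]
      subst hn
      rw [hd, dif_neg (by omega)]
  · simp only [Lsh, Fin.cons_succ, Fin.val_succ]
    rcases Nat.lt_or_ge ((j : ℕ) + 1 + 1) (n+1) with h | h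
    · rw [dif_pos h]
      have h2 : (j:ℕ) + 1 < n := by omega
      rw [dif_pos h2]
      rw [show (⟨(j:ℕ)+1+1, h⟩ : Fin (n+1)) = Fin.succ ⟨(j:ℕ)+1, h2⟩ by rfl, Fin.cons_succ]
    · rw [dif_neg (by omega), dif_neg (by omega)]

/-- the transition pattern matrix on bit strings -/
noncomputable def Em (n : ℕ) : Matrix (Fin n → Bool) (Fin n → Bool) ℝ :=
  fun x y => if hd x = false ∧ y = Lsh x then 1 else 0

noncomputable def Qm (n : ℕ) : Matrix (Fin n → Bool) (Fin n → Bool) ℝ :=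
  fun x y => if hd x = true ∧ y = Lsh x then 1 else 0

/-- Identification of `Fin (2^n)` with bit strings, compatible with `blockEquiv`. -/
def dd : (n : ℕ) → (Fin (2^n) ≃ (Fin n → Bool))
  | 0 => (finCongr (pow_zero 2)).trans (Equiv.ofUnique (Fin 1) (Fin 0 → Bool))
  | n + 1 => (blockEquiv n).symm.trans ((Equiv.sumCongr (dd n) (dd n)).trans
      (((Equiv.boolProdEquivSum _).symm).trans (Fin.consEquiv (fun _ => Bool))))

lemma dd_inl {n : ℕ} (u : Fin (2^n)) :
    dd (n+1) (blockEquiv n (Sum.inl u)) = Fin.cons false (dd n u) := by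
  simp [dd, Fin.consEquiv]

lemma dd_inr {n : ℕ} (u : Fin (2^n)) :
    dd (n+1) (blockEquiv n (Sum.inr u)) = Fin.cons true (dd n u) := by
  simp [dd, Fin.consEquiv]

lemma mkBlock_apply {n : ℕ} (A B C D : Matrix (Fin (2^n)) (Fin (2^n)) ℝ)
    (u v : Fin (2^n) ⊕ Fin (2^n)) :
    mkBlock A B C D (blockEquiv n u) (blockEquiv n v) = Matrix.fromBlocks A B C D u v := by
  simp [mkBlock, Matrix.reindex_apply, Matrix.submatrix_apply]

lemma PQ_eq : ∀ n, (∀ i j, (PQ n).1 i j = Em n (dd n i) (dd n j))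
    ∧ (∀ i j, (PQ n).2 i j = Qm n (dd n i) (dd n j))
  | 0 => by
    constructor
    · intro i j
      have : i = j := by
        apply Fin.ext
        have hi := i.isLt; have hj := j.isLt
        norm_num at hi hj; omega
      subst this
      show (1 : Matrix (Fin (2^0)) (Fin (2^0)) ℝ) i i = _
      rw [Matrix.one_apply_eq]
      rw [Em]
      rw [if_pos ⟨by rw [hd]; simp, funext fun i => absurd i.isLt (by omega)⟩]
    · intro i j
      show (0:ℝ) = _
      rw [Qm, if_neg]
      rintro ⟨h, -⟩
      rw [hd, dif_neg (by omega)] at h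
      exact Bool.false_ne_true h
  | n + 1 => by
    obtain ⟨ih1, ih2⟩ := PQ_eq n
    have key : ∀ (u v : Fin (2^n) ⊕ Fin (2^n)),
        ((PQ (n+1)).1 (blockEquiv n u) (blockEquiv n v)
          = Em (n+1) (dd (n+1) (blockEquiv n u)) (dd (n+1) (blockEquiv n v)))
        ∧ ((PQ (n+1)).2 (blockEquiv n u) (blockEquiv n v)
          = Qm (n+1) (dd (n+1) (blockEquiv n u)) (dd (n+1) (blockEquiv n v))) := by
      rintro (u | u) (v | v) <;>
        rw [show (PQ (n+1)).1 = mkBlock (PQ n).1 (PQ n).2 0 0 from rfl,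
            show (PQ (n+1)).2 = mkBlock 0 0 (PQ n).1 (PQ n).2 from rfl,
            mkBlock_apply, mkBlock_apply] <;>
        simp only [Matrix.fromBlocks_apply₁₁, Matrix.fromBlocks_apply₁₂,
          Matrix.fromBlocks_apply₂₁, Matrix.fromBlocks_apply₂₂,
          dd_inl, dd_inr, Matrix.zero_apply] <;>
      · constructor <;>
          simp only [Em, Qm, hd_cons, Lsh_cons, Fin.cons_inj, ih1 u v, ih2 u v] <;>
          · rcases hb : hd (dd n u) <;> simp [hb, eq_comm]
    refine ⟨fun i j => ?_, fun i j => ?_⟩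
    · have h := (key ((blockEquiv n).symm i) ((blockEquiv n).symm j)).1
      rwa [Equiv.apply_symm_apply, Equiv.apply_symm_apply] at h
    · have h := (key ((blockEquiv n).symm i) ((blockEquiv n).symm j)).2
      rwa [Equiv.apply_symm_apply, Equiv.apply_symm_apply] at h
  termination_by n => n

end BBS

namespace BBS

/-- Chebyshev polynomials of the second kind, evaluated. -/
noncomputable def chebU (x : ℝ) : ℕ → ℝ
  | 0 => 1
  | 1 => 2*x
  | (k+2) => 2*x*chebU x (k+1) - chebU x k

lemma chebU_cos (θ : ℝ) : ∀ k, chebU (Real.cos θ) k * Real.sin θ = Real.sin ((k+1) * θ)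
  | 0 => by simp [chebU]
  | 1 => by
    rw [chebU, show ((1:ℕ)+1 : ℝ) * θ = 2 * θ by push_cast; ring, Real.sin_two_mul]
    ring
  | (k+2) => by
    have h1 := chebU_cos θ (k+1)
    have h0 := chebU_cos θ k
    push_cast at h1 h0
    rw [chebU, sub_mul, mul_assoc, mul_assoc, mul_comm (Real.cos θ), ← mul_assoc, h1, h0]
    push_cast
    rw [show ((k:ℝ)+2+1) * θ = ((k:ℝ)+1+1)*θ + θ by ring,
      show ((k:ℝ)+1) * θ = ((k:ℝ)+1+1)*θ - θ by ring,
      Real.sin_add, Real.sin_sub]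
    ring

lemma chebU_one : ∀ k, chebU 1 k = k + 1
  | 0 => by simp [chebU]
  | 1 => by norm_num [chebU]
  | (k+2) => by
    rw [chebU, chebU_one (k+1), chebU_one k]
    push_cast; ring

lemma chebU_neg (x : ℝ) : ∀ k, chebU (-x) k = (-1)^k * chebU x k
  | 0 => by simp [chebU]
  | 1 => by rw [show chebU (-x) 1 = 2*(-x) from rfl, show chebU x 1 = 2*x from rfl]; ring
  | (k+2) => by
    rw [chebU, chebU, chebU_neg x (k+1), chebU_neg x k]
    ring

lemma chebU_ge_of_one_lt {x : ℝ} (hx : 1 < x) :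
    ∀ k, 1 ≤ chebU x k ∧ chebU x k ≤ chebU x (k+1)
  | 0 => by constructor <;> simp [chebU] <;> nlinarith
  | (k+1) => by
    obtain ⟨h1, h2⟩ := chebU_ge_of_one_lt hx k
    constructor
    · linarith
    · show chebU x (k+1) ≤ chebU x (k+2)
      rw [chebU]
      nlinarith

lemma chebU_ne_zero {x : ℝ} {m : ℕ} (hm : 1 ≤ m)
    (h : ∀ p : ℕ, 1 ≤ p → p ≤ m → x ≠ Real.cos (p * Real.pi / (m+1))) :
    chebU x m ≠ 0 := by
  rcases le_or_gt x (-1) with hx | hx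
  · rcases eq_or_lt_of_le hx with hx | hx
    · rw [show x = -1 by linarith, show (-1 : ℝ) = -(1:ℝ) by ring, chebU_neg, chebU_one]
      intro hc
      rcases mul_eq_zero.1 hc with hc | hc
      · exact absurd hc (by positivity)
      · have : (0:ℝ) < m + 1 := by positivity
        linarith
    · have h1 : (1:ℝ) < -x := by linarith
      have := (chebU_ge_of_one_lt h1 m).1
      have hpar : chebU (-(-x)) m = (-1)^m * chebU (-x) m := chebU_neg (-x) m
      rw [neg_neg] at hpar
      rw [hpar]
      intro hc
      rcases mul_eq_zero.1 hc with hc | hc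
      · exact absurd hc (by positivity)
      · linarith
  rcases lt_or_ge x 1 with hx1 | hx1
  swap
  · rcases eq_or_lt_of_le hx1 with hx1 | hx1
    · rw [← hx1, chebU_one]
      have : (0:ℝ) < m + 1 := by positivity
      intro hc; linarith
    · have := (chebU_ge_of_one_lt hx1 m).1
      linarith
  -- now -1 < x < 1
  set θ := Real.arccos x with hθ
  have hcos : Real.cos θ = x := Real.cos_arccos (by linarith) (by linarith)
  have hθpos : 0 < θ := Real.arccos_pos.2 hx1
  have hθlt : θ < Real.pi := by
    rcases lt_or_eq_of_le (Real.arccos_le_pi x) with h' | h'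
    · exact h'
    · exact absurd (Real.arccos_eq_pi.1 h') (by linarith)
  have hsin : 0 < Real.sin θ := Real.sin_pos_of_pos_of_lt_pi hθpos hθlt
  intro hc
  have hs : Real.sin (((m:ℝ)+1) * θ) = 0 := by
    rw [← chebU_cos θ m, hcos, hc, zero_mul]
  obtain ⟨j, hj⟩ := Real.sin_eq_zero_iff.1 hs
  have hπ : 0 < Real.pi := Real.pi_pos
  have hm1 : (0:ℝ) < (m:ℝ) + 1 := by positivity
  have hjpos : 0 < (j:ℝ) := by
    by_contra hcon
    push_neg at hcon
    nlinarith [mul_pos hm1 hθpos, Real.pi_pos]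
  have hjlt : (j:ℝ) < (m:ℝ) + 1 := by nlinarith [mul_lt_mul_of_pos_left hθlt hm1]
  have hj0 : 0 < j := by exact_mod_cast hjpos
  lift j to ℕ using (by omega : 0 ≤ j) with p
  have hp1 : 1 ≤ p := by exact_mod_cast hj0
  have hpm : p ≤ m := by
    have : (p:ℝ) < (m:ℝ)+1 := by exact_mod_cast hjlt
    have := (by exact_mod_cast this : (p:ℝ) < ((m+1:ℕ):ℝ))
    have : p < m+1 := by exact_mod_cast this
    omega
  apply h p hp1 hpm
  have hθeq : θ = p * Real.pi / (m+1) := by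
    push_cast at hj
    field_simp
    linarith [hj]
  rw [← hcos, hθeq]

end BBS

namespace BBS

/-- right shift, prepending `false` -/
def Rsh {n : ℕ} (x : Fin n → Bool) : Fin n → Bool :=
  fun i => if h : 0 < (i : ℕ) then
    x ⟨(i:ℕ) - 1, by have := i.isLt; omega⟩ else false

/-- last entry of a bit string -/
def lst {n : ℕ} (x : Fin n → Bool) : Bool :=
  if h : 0 < n then x ⟨n-1, by omega⟩ else false

lemma lst_Lsh {n : ℕ} (y : Fin n → Bool) : lst (Lsh y) = false := by
  rw [lst]
  split
  · rename_i h
    rw [Lsh, dif_neg (by simp; omega)]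
  · rfl

lemma hd_Rsh {n : ℕ} (x : Fin n → Bool) : hd (Rsh x) = false := by
  rw [hd]
  split
  · rw [Rsh, dif_neg (by simp)]
  · rfl

lemma Rsh_Lsh {n : ℕ} (y : Fin n → Bool) (h : hd y = false) : Rsh (Lsh y) = y := by
  funext i
  rw [Rsh]
  split
  · rename_i hi
    rw [Lsh]
    rw [dif_pos (by have := i.isLt; omega : (i:ℕ) - 1 + 1 < n)]
    congr 1
    apply Fin.ext
    simp
    omega
  · rename_i hi
    have h0 : 0 < n := i.pos
    rw [hd, dif_pos h0] at h
    rw [show i = (⟨0, h0⟩ : Fin n) by apply Fin.ext; show (i:ℕ) = 0; omega]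
    exact h.symm

lemma Lsh_Rsh {n : ℕ} (x : Fin n → Bool) (h : lst x = false) : Lsh (Rsh x) = x := by
  funext i
  rw [Lsh]
  split
  · rename_i hi
    rw [Rsh, dif_pos (by omega : 0 < (i:ℕ)+1)]
    exact congrArg x (by apply Fin.ext; simp)
  · rename_i hi
    have h0 : 0 < n := i.pos
    rw [lst, dif_pos h0] at h
    rw [show i = (⟨n-1, by omega⟩ : Fin n) by
      apply Fin.ext; show (i:ℕ) = n-1; have := i.isLt; omega]
    exact h.symm

lemma dual {n : ℕ} (x y : Fin n → Bool) :
    (hd y = false ∧ x = Lsh y) ↔ (lst x = false ∧ y = Rsh x) := by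
  constructor
  · rintro ⟨h1, rfl⟩
    exact ⟨lst_Lsh y, (Rsh_Lsh y h1).symm⟩
  · rintro ⟨h2, rfl⟩
    exact ⟨hd_Rsh x, (Lsh_Rsh x h2).symm⟩

/-- the conjugated operator, on bit strings -/
noncomputable def NV (n : ℕ) : Matrix (Fin n → Bool) (Fin n → Bool) ℝ :=
  (1/2 : ℝ) • (Em n + (Em n)ᵀ)

lemma det_transfer_V (n : ℕ) (x : ℝ) :
    Matrix.det (Nmat n - x • 1) = 0 ↔ Matrix.det (NV n - x • 1) = 0 := by
  have h : Nmat n - x • 1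
      = (Matrix.reindex (dd n).symm (dd n).symm) (NV n - x • 1) := by
    ext i j
    rw [Matrix.reindex_apply, Matrix.submatrix_apply, Equiv.symm_symm]
    rw [Matrix.sub_apply, Matrix.sub_apply, Matrix.smul_apply, Matrix.smul_apply,
      Matrix.one_apply, Matrix.one_apply, Nmat, NV,
      Matrix.smul_apply, Matrix.smul_apply, Matrix.add_apply, Matrix.add_apply,
      Matrix.transpose_apply, Matrix.transpose_apply,
      (PQ_eq n).1 i j, (PQ_eq n).1 j i]
    congr 2
    simp [EmbeddingLike.apply_eq_iff_eq]
  rw [h, Matrix.det_reindex_self]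

lemma NV_mulVec {n : ℕ} (f : (Fin n → Bool) → ℝ) (x : Fin n → Bool) :
    (NV n *ᵥ f) x = (1/2 : ℝ) * ((if hd x = false then f (Lsh x) else 0)
      + (if lst x = false then f (Rsh x) else 0)) := by
  have h1 : (Em n *ᵥ f) x = if hd x = false then f (Lsh x) else 0 := by
    have e : (Em n *ᵥ f) x = ∑ y, Em n x y * f y := rfl
    rw [e]
    by_cases h : hd x = false
    · rw [if_pos h, Finset.sum_eq_single (Lsh x)]
      · rw [show Em n x (Lsh x) = 1 by rw [Em, if_pos ⟨h, rfl⟩], one_mul]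
      · intro y _ hy
        rw [show Em n x y = 0 by rw [Em, if_neg (fun hc => hy hc.2)], zero_mul]
      · intro hy; exact absurd (Finset.mem_univ _) hy
    · rw [if_neg h]
      apply Finset.sum_eq_zero
      intro y _
      rw [show Em n x y = 0 by rw [Em, if_neg (fun hc => h hc.1)], zero_mul]
  have h2 : ((Em n)ᵀ *ᵥ f) x = if lst x = false then f (Rsh x) else 0 := by
    have e : ((Em n)ᵀ *ᵥ f) x = ∑ y, Em n y x * f y := rfl
    have e2 : ∀ y, Em n y x = if lst x = false ∧ y = Rsh x then 1 else 0 := by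
      intro y
      rw [Em]
      exact if_congr (dual x y) rfl rfl
    rw [e]
    by_cases h : lst x = false
    · rw [if_pos h, Finset.sum_eq_single (Rsh x)]
      · rw [show Em n (Rsh x) x = 1 by rw [e2, if_pos ⟨h, rfl⟩], one_mul]
      · intro y _ hy
        rw [show Em n y x = 0 by rw [e2, if_neg (fun hc => hy hc.2)], zero_mul]
      · intro hy; exact absurd (Finset.mem_univ _) hy
    · rw [if_neg h]
      apply Finset.sum_eq_zero
      intro y _
      rw [show Em n y x = 0 by rw [e2, if_neg (fun hc => h hc.1)], zero_mul]
  rw [NV, Matrix.smul_mulVec, Matrix.add_mulVec]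
  rw [Pi.smul_apply, Pi.add_apply, h1, h2]
  simp

lemma det_zero_of_eigen {n : ℕ} (A : Matrix (Fin n → Bool) (Fin n → Bool) ℝ) (x : ℝ)
    (g : (Fin n → Bool) → ℝ) (hg : g ≠ 0) (h : A *ᵥ g = x • g) :
    Matrix.det (A - x • 1) = 0 := by
  rw [← Matrix.exists_mulVec_eq_zero_iff]
  refine ⟨g, hg, ?_⟩
  rw [Matrix.sub_mulVec, h, Matrix.smul_mulVec, Matrix.one_mulVec, sub_self]

lemma eigen_of_det_zero {n : ℕ} (A : Matrix (Fin n → Bool) (Fin n → Bool) ℝ) (x : ℝ)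
    (h : Matrix.det (A - x • 1) = 0) :
    ∃ g : (Fin n → Bool) → ℝ, g ≠ 0 ∧ A *ᵥ g = x • g := by
  obtain ⟨g, hg, hsol⟩ := Matrix.exists_mulVec_eq_zero_iff.2 h
  refine ⟨g, hg, ?_⟩
  rw [Matrix.sub_mulVec, Matrix.smul_mulVec, Matrix.one_mulVec, sub_eq_zero] at hsol
  exact hsol

end BBS

namespace BBS

/-- vertices of an embedded path in the shift graph -/
def pathV (n m k : ℕ) : Fin n → Bool := fun i => decide ((i:ℕ) = m-1-k ∨ (i:ℕ) = n-1-k)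

lemma pathV_inj {n m : ℕ} (hm1 : 1 ≤ m) (hmn : m ≤ n) {k k' : ℕ} (hk : k < m) (hk' : k' < m)
    (h : pathV n m k = pathV n m k') : k = k' := by
  have h1 := congrFun h ⟨n-1-k, by omega⟩
  have h2 := congrFun h ⟨n-1-k', by omega⟩
  simp only [pathV, decide_eq_decide] at h1 h2
  rw [or_true, true_iff] at h1
  rw [or_true, iff_true] at h2
  omega

lemma hd_pathV {n m : ℕ} (hm1 : 1 ≤ m) (hmn : m ≤ n) {k : ℕ} (hk : k < m) :
    hd (pathV n m k) = decide (k = m-1) := by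
  rw [hd, dif_pos (by omega : 0 < n), pathV]
  rw [decide_eq_decide]
  show ((0:ℕ) = m-1-k ∨ (0:ℕ) = n-1-k) ↔ _
  omega

lemma lst_pathV {n m : ℕ} (hm1 : 1 ≤ m) (hmn : m ≤ n) {k : ℕ} (hk : k < m) :
    lst (pathV n m k) = decide (k = 0) := by
  rw [lst, dif_pos (by omega : 0 < n), pathV]
  rw [decide_eq_decide]
  show ((n-1:ℕ) = m-1-k ∨ (n-1:ℕ) = n-1-k) ↔ _
  omega

lemma Lsh_pathV {n m : ℕ} (hm1 : 1 ≤ m) (hmn : m ≤ n) {k : ℕ} (hk : k < m - 1) :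
    Lsh (pathV n m k) = pathV n m (k+1) := by
  funext i
  have hi := i.isLt
  rw [Lsh]
  split
  · rename_i h
    show decide _ = decide _
    rw [decide_eq_decide]
    show ((i:ℕ)+1 = m-1-k ∨ (i:ℕ)+1 = n-1-k) ↔ ((i:ℕ) = m-1-(k+1) ∨ (i:ℕ) = n-1-(k+1))
    omega
  · rename_i h
    show false = decide _
    rw [eq_comm, decide_eq_false_iff_not]
    show ¬((i:ℕ) = m-1-(k+1) ∨ (i:ℕ) = n-1-(k+1))
    omega

lemma Rsh_pathV {n m : ℕ} (hm1 : 1 ≤ m) (hmn : m ≤ n) {k : ℕ} (hk : 1 ≤ k) (hk2 : k < m) :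
    Rsh (pathV n m k) = pathV n m (k-1) := by
  have h1 : Lsh (pathV n m (k-1)) = pathV n m k := by
    rw [Lsh_pathV hm1 hmn (by omega : k-1 < m-1), show k-1+1 = k by omega]
  rw [← h1, Rsh_Lsh]
  rw [hd_pathV hm1 hmn (by omega : k-1 < m)]
  exact decide_eq_false (by omega)

section CosEigen

variable {n p q : ℕ}

lemma cos_eigen (hn : 1 ≤ n) (hp : 1 ≤ p) (hpq : p < q) (hq : q ≤ n + 1) :
    Matrix.det (NV n - Real.cos (p * Real.pi / q) • 1) = 0 := by
  set m := q - 1 with hm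
  have hm1 : 1 ≤ m := by omega
  have hmn : m ≤ n := by omega
  set θ := p * Real.pi / q with hθ
  set lam := Real.cos θ with hlam
  -- basic facts about θ
  have hπ := Real.pi_pos
  have hqq : 0 < q := by omega
  have hq0 : (0:ℝ) < q := by exact_mod_cast hqq
  have hθpos : 0 < θ := by
    have hp' : (0:ℝ) < p := by exact_mod_cast hp
    exact div_pos (mul_pos hp' hπ) hq0
  have hθlt : θ < Real.pi := by
    rw [hθ, div_lt_iff₀ hq0]
    have : (p:ℝ) < q := by exact_mod_cast hpq
    nlinarith
  have hsinθ : 0 < Real.sin θ := Real.sin_pos_of_pos_of_lt_pi hθpos hθlt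
  have hsinq : Real.sin (((m:ℝ)+1) * θ) = 0 := by
    have hmq : (m:ℝ)+1 = q := by
      have : (1:ℕ) ≤ q := by omega
      push_cast [hm]
      have : (1:ℝ) ≤ (q:ℝ) := by exact_mod_cast this
      ring_nf
      rw [Nat.cast_sub (by omega : 1 ≤ q)]
      ring
    rw [hmq, hθ]
    rw [show (q:ℝ) * ((p:ℝ) * Real.pi / q) = p * Real.pi by field_simp]
    exact Real.sin_nat_mul_pi p
  have hadd : ∀ j : ℕ, Real.sin (((j:ℝ)+2) * θ) + Real.sin ((j:ℝ) * θ)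
      = 2 * lam * Real.sin (((j:ℝ)+1) * θ) := by
    intro j
    rw [show ((j:ℝ)+2) * θ = ((j:ℝ)+1)*θ + θ by ring,
      show (j:ℝ) * θ = ((j:ℝ)+1)*θ - θ by ring, Real.sin_add, Real.sin_sub, hlam]
    ring
  -- the eigenvector
  set g : (Fin n → Bool) → ℝ :=
    fun z => ∑ k ∈ Finset.range m, if z = pathV n m k then Real.sin (((k:ℝ)+1) * θ) else 0
    with hg
  have hgval : ∀ k, k < m → g (pathV n m k) = Real.sin (((k:ℝ)+1) * θ) := by
    intro k hk
    show (∑ k' ∈ Finset.range m,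
      if pathV n m k = pathV n m k' then Real.sin (((k':ℝ)+1) * θ) else 0) = _
    rw [Finset.sum_eq_single k]
    · rw [if_pos rfl]
    · intro k' hk' hne
      rw [if_neg]
      intro hc
      exact hne (pathV_inj hm1 hmn (Finset.mem_range.1 hk') hk hc.symm)
    · intro hc
      exact absurd (Finset.mem_range.2 hk) hc
  have hgnot : ∀ z, (∀ k, k < m → z ≠ pathV n m k) → g z = 0 := by
    intro z hz
    show (∑ k ∈ Finset.range m,
      if z = pathV n m k then Real.sin (((k:ℝ)+1) * θ) else 0) = 0
    apply Finset.sum_eq_zero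
    intro k hk
    rw [if_neg (hz k (Finset.mem_range.1 hk))]
  have hgne : g ≠ 0 := by
    intro hc
    have := hgval 0 (by omega)
    rw [hc] at this
    simp at this
    linarith
  apply det_zero_of_eigen _ _ g hgne
  funext z
  rw [NV_mulVec, Pi.smul_apply, smul_eq_mul]
  by_cases hz : ∃ k, k < m ∧ z = pathV n m k
  · obtain ⟨k, hk, rfl⟩ := hz
    rw [hd_pathV hm1 hmn hk, lst_pathV hm1 hmn hk, hgval k hk]
    by_cases hk0 : k = 0 <;> by_cases hkm : k = m-1
    · -- m = 1
      subst hk0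
      rw [if_neg (by simp [← hkm]), if_neg (by simp)]
      have hm1' : m = 1 := by omega
      have h2θ : Real.sin (2 * θ) = 0 := by
        have e : (2:ℝ) = (m:ℝ)+1 := by rw [hm1']; norm_num
        rw [e]; exact hsinq
      rw [Real.sin_two_mul] at h2θ
      simp only [Nat.cast_zero, zero_add, one_mul]
      rw [hlam]
      nlinarith [h2θ]
    · -- k = 0 < m-1
      subst hk0
      rw [if_pos (decide_eq_false (by omega)), if_neg (by simp)]
      rw [Lsh_pathV hm1 hmn (by omega : 0 < m-1), hgval 1 (by omega)]
      have h0 := hadd 0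
      norm_num at h0 ⊢
      nlinarith [h0]
    · -- k = m-1 > 0
      rw [if_neg (by simp only [decide_eq_false_iff_not, not_not]; omega),
        if_pos (decide_eq_false (by omega))]
      rw [Rsh_pathV hm1 hmn (by omega) hk, hgval (k-1) (by omega)]
      have h0 := hadd k
      have e1 : ((k:ℝ)+2 : ℝ) = (m:ℝ)+1 := by
        have : k + 2 = m + 1 := by omega
        exact_mod_cast this
      rw [e1, hsinq] at h0
      have e2 : (((k-1:ℕ)):ℝ) = (k:ℝ)-1 := by
        rw [Nat.cast_sub (by omega : 1 ≤ k)]; norm_num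
      rw [e2, show ((k:ℝ)-1+1 : ℝ) = (k:ℝ) by ring]
      linarith [h0]
    · -- interior
      rw [if_pos (decide_eq_false (by omega)), if_pos (decide_eq_false (by omega))]
      rw [Lsh_pathV hm1 hmn (by omega : k < m-1), hgval (k+1) (by omega),
        Rsh_pathV hm1 hmn (by omega) hk, hgval (k-1) (by omega)]
      have h0 := hadd k
      have e2 : (((k-1:ℕ)):ℝ) = (k:ℝ)-1 := by
        rw [Nat.cast_sub (by omega : 1 ≤ k)]; norm_num
      have e3 : (((k+1:ℕ)):ℝ) = (k:ℝ)+1 := by push_cast; ring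
      rw [e3, e2, show ((k:ℝ)-1+1 : ℝ) = (k:ℝ) by ring]
      rw [show ((k:ℝ)+2)*θ = ((k:ℝ)+1+1)*θ by ring] at h0
      linarith [h0]
  · push_neg at hz
    rw [hgnot z hz]
    have ht1 : (if hd z = false then g (Lsh z) else 0) = 0 := by
      split
      · rename_i hhd
        apply hgnot
        intro k hk hc
        have hlst : lst (pathV n m k) = false := by rw [← hc]; exact lst_Lsh z
        rw [lst_pathV hm1 hmn hk] at hlst
        have hk0 : k ≠ 0 := by simpa using hlst
        have : z = pathV n m (k-1) := by
          rw [← Rsh_pathV hm1 hmn (by omega) hk, ← hc, Rsh_Lsh z hhd]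
        exact hz (k-1) (by omega) this
      · rfl
    have ht2 : (if lst z = false then g (Rsh z) else 0) = 0 := by
      split
      · rename_i hlst
        apply hgnot
        intro k hk hc
        have hhd : hd (pathV n m k) = false := by rw [← hc]; exact hd_Rsh z
        rw [hd_pathV hm1 hmn hk] at hhd
        have hkm : k ≠ m-1 := by simpa using hhd
        have : z = pathV n m (k+1) := by
          rw [← Lsh_pathV hm1 hmn (by omega : k < m-1), ← hc, Lsh_Rsh z hlst]
        exact hz (k+1) (by omega) this
      · rfl
    rw [ht1, ht2]
    simp

end CosEigen

end BBS

namespace BBS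

lemma hd_zero {n : ℕ} : hd (fun _ => false : Fin n → Bool) = false := by
  rw [hd]; split <;> rfl

lemma lst_zero {n : ℕ} : lst (fun _ => false : Fin n → Bool) = false := by
  rw [lst]; split <;> rfl

lemma Lsh_zero {n : ℕ} : Lsh (fun _ => false : Fin n → Bool) = (fun _ => false) := by
  funext i; rw [Lsh]; split <;> rfl

lemma Rsh_zero {n : ℕ} : Rsh (fun _ => false : Fin n → Bool) = (fun _ => false) := by
  funext i; rw [Rsh]; split <;> rfl

lemma one_eigen (n : ℕ) : Matrix.det (NV n - (1:ℝ) • 1) = 0 := by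
  set z0 : Fin n → Bool := (fun _ => false) with hz0
  set g : (Fin n → Bool) → ℝ := fun z => if z = z0 then (1:ℝ) else 0 with hg
  have hgval : g z0 = 1 := by rw [hg]; simp
  apply det_zero_of_eigen _ _ g
  · intro hc
    have : g z0 = 0 := by rw [hc]; rfl
    rw [hgval] at this; exact one_ne_zero this
  · funext z
    rw [NV_mulVec, Pi.smul_apply, smul_eq_mul, one_mul]
    by_cases hz : z = z0
    · subst hz
      rw [hd_zero, lst_zero, if_pos rfl, if_pos rfl, Lsh_zero, Rsh_zero]
      rw [hgval]
      norm_num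
    · have hgz : g z = 0 := by rw [hg]; exact if_neg hz
      rw [hgz]
      have h1 : (if hd z = false then g (Lsh z) else 0) = 0 := by
        split
        · rename_i hhd
          rw [hg]
          apply if_neg
          intro hc
          apply hz
          rw [← Rsh_Lsh z hhd, hc, hz0, Rsh_zero]
        · rfl
      have h2 : (if lst z = false then g (Rsh z) else 0) = 0 := by
        split
        · rename_i hlst
          rw [hg]
          apply if_neg
          intro hc
          apply hz
          rw [← Lsh_Rsh z hlst, hc, hz0, Lsh_zero]
        · rfl
      rw [h1, h2]
      norm_num

lemma Lsh_iter {n : ℕ} : ∀ (k : ℕ) (x : Fin n → Bool) (i : Fin n),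
    (Lsh^[k] x) i = if h : (i:ℕ)+k < n then x ⟨(i:ℕ)+k, h⟩ else false
  | 0, x, i => by
    rw [Function.iterate_zero_apply, dif_pos (by simpa using i.isLt)]
    exact (congrArg x (by apply Fin.ext; simp)).symm
  | (k+1), x, i => by
    rw [Function.iterate_succ_apply, Lsh_iter k (Lsh x) i]
    by_cases h : (i:ℕ) + (k+1) < n
    · rw [dif_pos (by omega : (i:ℕ)+k < n), dif_pos h, Lsh,
        dif_pos (by omega : (i:ℕ)+k+1 < n)]
      exact congrArg x (by apply Fin.ext; show (i:ℕ)+k+1 = (i:ℕ)+(k+1); omega)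
    · by_cases h2 : (i:ℕ) + k < n
      · rw [dif_pos h2, dif_neg h, Lsh, dif_neg (by show ¬((i:ℕ)+k+1 < n); omega)]
      · rw [dif_neg h2, dif_neg h]

lemma Rsh_iter {n : ℕ} : ∀ (k : ℕ) (x : Fin n → Bool) (i : Fin n),
    (Rsh^[k] x) i = if h : k ≤ (i:ℕ) then x ⟨(i:ℕ)-k, by have := i.isLt; omega⟩ else false
  | 0, x, i => by
    rw [Function.iterate_zero_apply, dif_pos (by omega : 0 ≤ (i:ℕ))]
    exact (congrArg x (by apply Fin.ext; simp)).symm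
  | (k+1), x, i => by
    rw [Function.iterate_succ_apply, Rsh_iter k (Rsh x) i]
    by_cases h : k+1 ≤ (i:ℕ)
    · rw [dif_pos (by omega : k ≤ (i:ℕ)), dif_pos h, Rsh,
        dif_pos (by omega : 0 < (i:ℕ)-k)]
      exact congrArg x (by apply Fin.ext; simp; omega)
    · by_cases h2 : k ≤ (i:ℕ)
      · rw [dif_pos h2, dif_neg h, Rsh, dif_neg (by show ¬(0 < (i:ℕ)-k); omega)]
      · rw [dif_neg h2, dif_neg h]

lemma eigen_mem (n : ℕ) (hn : 1 ≤ n) (x : ℝ)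
    (hdet : Matrix.det (NV n - x • 1) = 0) :
    x = 1 ∨ ∃ p q : ℕ, 1 ≤ p ∧ p < q ∧ q ≤ n + 1 ∧ x = Real.cos (p * Real.pi / q) := by
  by_contra hcon
  push_neg at hcon
  obtain ⟨hx1, hx2⟩ := hcon
  obtain ⟨f, hf0, hfeq⟩ := eigen_of_det_zero _ _ hdet
  have heig : ∀ z, x * f z = (1/2 : ℝ) * ((if hd z = false then f (Lsh z) else 0)
      + (if lst z = false then f (Rsh z) else 0)) := by
    intro z
    have h := congrFun hfeq z
    rw [NV_mulVec] at h
    rw [Pi.smul_apply, smul_eq_mul] at h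
    exact h.symm
  apply hf0
  funext z
  show f z = 0
  by_cases hz0 : z = (fun _ => false)
  · subst hz0
    have h := heig (fun _ => false)
    rw [hd_zero, lst_zero, if_pos rfl, if_pos rfl, Lsh_zero, Rsh_zero] at h
    have : (x - 1) * f (fun _ => false) = 0 := by linarith
    rcases mul_eq_zero.1 this with h' | h'
    · exact absurd (by linarith : x = 1) hx1
    · exact h'
  · -- z has a true bit
    set zz : ℕ → Bool := fun k => if h : k < n then z ⟨k, h⟩ else false with hzz
    have hzzv : ∀ i : Fin n, zz (i:ℕ) = z i := by
      intro i
      rw [hzz]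
      exact dif_pos i.isLt
    have hex : ∃ k, zz k = true := by
      by_contra hne
      push_neg at hne
      apply hz0
      funext i
      have h' := hne (i:ℕ)
      rw [hzzv i] at h'
      exact Bool.eq_false_iff.mpr h'
    obtain ⟨k0, hk0⟩ := hex
    have hk0n : k0 < n := by
      by_contra h'
      simp only [hzz] at hk0
      rw [dif_neg h'] at hk0
      exact Bool.false_ne_true hk0
    set b := Nat.findGreatest (fun k => zz k = true) n with hb
    have hbP : zz b = true := Nat.findGreatest_spec (P := fun k => zz k = true) (Nat.le_of_lt hk0n) hk0
    have hbn : b < n := by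
      by_contra h'
      simp only [hzz] at hbP
      rw [dif_neg (by omega)] at hbP
      exact Bool.false_ne_true hbP
    have hbmax : ∀ j, b < j → zz j = false := by
      intro j hj
      by_cases hjn : j ≤ n
      · exact Bool.eq_false_iff.mpr (Nat.findGreatest_is_greatest hj hjn)
      · simp only [hzz]
        rw [dif_neg (by omega)]
    have hexa : ∃ k, zz k = true := ⟨k0, hk0⟩
    set a := Nat.find hexa with ha
    have haP : zz a = true := Nat.find_spec hexa
    have hamin : ∀ j, j < a → zz j = false :=
      fun j hj => Bool.eq_false_iff.mpr (Nat.find_min hexa hj)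
    have hak : a ≤ k0 := Nat.find_min' hexa hk0
    have hab : a ≤ b := Nat.le_findGreatest (by omega) haP
    set J := n - 1 - b with hJ
    set m := n - (b - a) with hm
    have hm1 : 1 ≤ m := by omega
    have hmn : m ≤ n := by omega
    have hJm : J + a = m - 1 := by omega
    set w : ℕ → (Fin n → Bool) := fun k => Lsh^[k] (Rsh^[J] z) with hw
    have wz : ∀ (k : ℕ) (i : Fin n),
        w k i = if ((i:ℕ)+k < n ∧ J ≤ (i:ℕ)+k) then zz ((i:ℕ)+k-J) else false := by
      intro k i
      show Lsh^[k] (Rsh^[J] z) i = _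
      rw [Lsh_iter]
      by_cases h1 : (i:ℕ)+k < n
      · rw [dif_pos h1, Rsh_iter]
        by_cases h2 : J ≤ (i:ℕ)+k
        · rw [dif_pos h2, if_pos ⟨h1, h2⟩]
          simp only [hzz]
          rw [dif_pos (by omega : (i:ℕ)+k-J < n)]
        · rw [dif_neg h2, if_neg (fun hc => h2 hc.2)]
      · rw [dif_neg h1, if_neg (fun hc => h1 hc.1)]
    have Fsucc : ∀ k, w (k+1) = Lsh (w k) := by
      intro k
      show Lsh^[k+1] _ = _
      rw [Function.iterate_succ_apply']
    have Fhd : ∀ k, k ≤ m-1 → hd (w k) = decide (k = m-1) := by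
      intro k hk
      rw [hd, dif_pos (by omega : 0 < n)]
      rw [wz k ⟨0, by omega⟩]
      show (if (0+k < n ∧ J ≤ 0+k) then zz (0+k-J) else false) = _
      by_cases hc : k = m-1
      · rw [if_pos (by omega), show 0+k-J = a by omega, haP, hc]
        simp
      · rw [decide_eq_false hc]
        by_cases h2 : 0+k < n ∧ J ≤ 0+k
        · rw [if_pos h2]
          exact hamin _ (by omega)
        · rw [if_neg h2]
    have Flst0 : lst (w 0) = true := by
      rw [lst, dif_pos (by omega : 0 < n), wz 0 ⟨n-1, by omega⟩]
      show (if (n-1+0 < n ∧ J ≤ n-1+0) then zz (n-1+0-J) else false) = true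
      rw [if_pos (by omega), show n-1+0-J = b by omega]
      exact hbP
    have Flst : ∀ k, 1 ≤ k → lst (w k) = false := by
      intro k hk
      rw [lst, dif_pos (by omega : 0 < n), wz k ⟨n-1, by omega⟩]
      show (if (n-1+k < n ∧ J ≤ n-1+k) then zz (n-1+k-J) else false) = false
      rw [if_neg (by omega)]
    have Fpred : ∀ k, k+1 ≤ m-1 → Rsh (w (k+1)) = w k := by
      intro k hk
      rw [Fsucc, Rsh_Lsh]
      rw [Fhd k (by omega)]
      exact decide_eq_false (by omega)
    have Fz : z = w J := by
      funext i
      rw [wz J i]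
      by_cases h1 : (i:ℕ) ≤ b
      · rw [if_pos (by omega), show (i:ℕ)+J-J = (i:ℕ) by omega, hzzv]
      · rw [if_neg (by omega), ← hzzv, hbmax _ (by omega)]
    -- the chain equations
    have heq : ∀ k, k ≤ m-1 → x * f (w k)
        = (1/2 : ℝ) * ((if k = m-1 then 0 else f (w (k+1)))
          + (if k = 0 then 0 else f (w (k-1)))) := by
      intro k hk
      have h := heig (w k)
      rw [Fhd k hk] at h
      have e1 : (if decide (k = m-1) = false then f (Lsh (w k)) else 0)
          = (if k = m-1 then 0 else f (w (k+1))) := by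
        by_cases hc : k = m-1
        · rw [if_pos hc, if_neg (by simp [hc])]
        · rw [if_pos (decide_eq_false hc), if_neg hc, ← Fsucc]
      have e2 : (if lst (w k) = false then f (Rsh (w k)) else 0)
          = (if k = 0 then 0 else f (w (k-1))) := by
        by_cases hc : k = 0
        · rw [if_pos hc, hc, if_neg (by rw [Flst0]; simp)]
        · rw [if_neg hc, if_pos (Flst k (by omega)),
            show k = (k-1)+1 by omega, Fpred (k-1) (by omega),
            show k-1+1-1 = k-1 by omega]
      rw [e1, e2] at h
      exact h
    have chain : ∀ k, k ≤ m-1 → f (w k) = f (w 0) * chebU x k := by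
      intro k
      induction k using Nat.twoStepInduction with
      | zero => intro _; rw [show chebU x 0 = 1 from rfl, mul_one]
      | one =>
        intro h1
        have h := heq 0 (by omega)
        rw [if_neg (by omega), if_pos rfl] at h
        rw [show chebU x 1 = 2*x from rfl]
        linarith
      | more k ih1 ih2 =>
        intro h2
        have e := heq (k+1) (by omega)
        rw [if_neg (by omega), if_neg (by omega),
          show k+1-1 = k by omega] at e
        rw [ih1 (by omega), ih2 (by omega), show k+1+1 = k+2 from rfl] at e
        rw [show chebU x (k+2) = 2*x*chebU x (k+1) - chebU x k from rfl]
        linear_combination (-2 : ℝ) * e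
    have hUm : f (w 0) * chebU x m = 0 := by
      have e := heq (m-1) (le_refl _)
      rw [if_pos rfl] at e
      by_cases hm2 : m = 1
      · rw [if_pos (by omega)] at e
        rw [hm2, show chebU x 1 = 2*x from rfl]
        rw [show m - 1 = 0 by omega] at e
        linear_combination 2 * e
      · rw [if_neg (by omega)] at e
        rw [chain (m-1) (le_refl _), chain (m-1-1) (by omega)] at e
        obtain ⟨m', hm'⟩ : ∃ m', m = m'+2 := ⟨m-2, by omega⟩
        rw [hm'] at e ⊢
        rw [show m'+2-1 = m'+1 by omega, show m'+1-1 = m' by omega] at e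
        rw [show chebU x (m'+2) = 2*x*chebU x (m'+1) - chebU x m' from rfl]
        linear_combination 2 * e
    have hU : chebU x m ≠ 0 := by
      apply chebU_ne_zero hm1
      intro p hp1 hpm
      have := hx2 p (m+1) hp1 (by omega) (by omega)
      intro hc
      apply this
      rw [hc]
      push_cast
      ring_nf
    have hc0 : f (w 0) = 0 := by
      rcases mul_eq_zero.1 hUm with h' | h'
      · exact h'
      · exact absurd h' hU
    rw [Fz, chain J (by omega), hc0, zero_mul]

end BBS

/-- For every `n ≥ 1`, the set of real eigenvalues of the BBS translation
transition operator `M_B⁽ⁿ⁾` is exactly `{1} ∪ {cos(pπ/q) : 1 ≤ p < q ≤ n+1}`. -/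
theorem bbs_eigenvalues (n : ℕ) (hn : 1 ≤ n) :
    {x : ℝ | Matrix.det (MB n - x • (1 : Matrix (Fin (2 ^ n)) (Fin (2 ^ n)) ℝ)) = 0}
      = {1} ∪ {x : ℝ | ∃ p q : ℕ, 1 ≤ p ∧ p < q ∧ q ≤ n + 1 ∧
          x = Real.cos (p * Real.pi / q)} := by
  ext x
  simp only [Set.mem_setOf_eq, Set.mem_union, Set.mem_singleton_iff]
  rw [BBS.det_transfer n x, BBS.det_transfer_V n x]
  constructor
  · exact BBS.eigen_mem n hn x
  · rintro (rfl | ⟨p, q, hp, hpq, hq, rfl⟩)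
    · exact BBS.one_eigen n
    · exact BBS.cos_eigen hn hp hpq hq
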